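/- Let H be a 3-coloring of the 3-subsets of a 12-element set V with no 2-colored perfect matching. If X₁ and X₂ are 6-element subsets all of whose 3-subsets are monochromatic in color c₁ and c₂ respectively, with c₁ ≠ c₂, then |X₁ ∩ X₂| = 2. -/

import Mathlib

/-- `M` is a perfect matching of the complete 3-uniform hypergraph on 12 vertices
using at most two of the three colors under the coloring `χ`. -/
def TwoColoredPerfectMatching (χ : Finset (Fin 12) → Fin 3)
    (M : Finset (Finset (Fin 12))) : Prop :=
  M.card = 4 ∧ (∀ e ∈ M, e.card = 3) ∧
    (∀ e ∈ M, ∀ f ∈ M, e ≠ f → Disjoint e f) ∧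
    (∀ v : Fin 12, ∃ e ∈ M, v ∈ e) ∧
    ∃ c₁ c₂ : Fin 3, ∀ e ∈ M, χ e = c₁ ∨ χ e = c₂

/-- `B` is a B-set: a 6-element set such that some color is avoided by all of its
3-subsets and no two disjoint 3-subsets of `B` receive the same color. -/
def IsBSet (χ : Finset (Fin 12) → Fin 3) (B : Finset (Fin 12)) : Prop :=
  B.card = 6 ∧
    (∃ c : Fin 3, ∀ e ⊆ B, e.card = 3 → χ e ≠ c) ∧
    ∀ e ⊆ B, ∀ f ⊆ B, e.card = 3 → f.card = 3 → Disjoint e f → χ e ≠ χ f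

lemma two_others : ∀ c : Fin 3, ∃ u w : Fin 3, ∀ x : Fin 3, x ≠ c → (x = u ∨ x = w) := by
  decide

lemma pm_cover (χ : Finset (Fin 12) → Fin 3) (hH : ¬ ∃ M, TwoColoredPerfectMatching χ M)
    (T1 T2 T3 T4 : Finset (Fin 12))
    (h3 : T1.card = 3 ∧ T2.card = 3 ∧ T3.card = 3 ∧ T4.card = 3)
    (hd : Disjoint T1 T2 ∧ Disjoint T1 T3 ∧ Disjoint T1 T4 ∧
          Disjoint T2 T3 ∧ Disjoint T2 T4 ∧ Disjoint T3 T4)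
    (hu : T1 ∪ T2 ∪ T3 ∪ T4 = Finset.univ) :
    ∀ c : Fin 3, c = χ T1 ∨ c = χ T2 ∨ c = χ T3 ∨ c = χ T4 := by
  obtain ⟨c31, c32, c33, c34⟩ := h3
  obtain ⟨d12, d13, d14, d23, d24, d34⟩ := hd
  have hne : ∀ (s t : Finset (Fin 12)), s.card = 3 → Disjoint s t → s ≠ t := by
    intro s t hs hdj h
    subst h
    rw [disjoint_self] at hdj
    rw [Finset.bot_eq_empty] at hdj
    rw [hdj] at hs
    simp at hs
  have n12 := hne _ _ c31 d12
  have n13 := hne _ _ c31 d13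
  have n14 := hne _ _ c31 d14
  have n23 := hne _ _ c32 d23
  have n24 := hne _ _ c32 d24
  have n34 := hne _ _ c33 d34
  intro c
  by_contra hcon
  push_neg at hcon
  obtain ⟨h1, h2, h3, h4⟩ := hcon
  apply hH
  refine ⟨{T1,T2,T3,T4}, ?_, ?_, ?_, ?_, ?_⟩
  · rw [Finset.card_insert_of_notMem (by simp [n12, n13, n14]),
      Finset.card_insert_of_notMem (by simp [n23, n24]),
      Finset.card_insert_of_notMem (by simp [n34]), Finset.card_singleton]
  · intro e he
    simp only [Finset.mem_insert, Finset.mem_singleton] at he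
    rcases he with rfl|rfl|rfl|rfl <;> assumption
  · intro e he f hf hne'
    simp only [Finset.mem_insert, Finset.mem_singleton] at he hf
    rcases he with rfl|rfl|rfl|rfl <;> rcases hf with rfl|rfl|rfl|rfl <;>
      first | exact absurd rfl hne' | assumption | (exact Disjoint.symm (by assumption))
  · intro x
    have : x ∈ T1 ∪ T2 ∪ T3 ∪ T4 := by rw [hu]; exact Finset.mem_univ x
    simp only [Finset.mem_union] at this
    rcases this with ((h|h)|h)|h
    · exact ⟨T1, by simp, h⟩
    · exact ⟨T2, by simp, h⟩
    · exact ⟨T3, by simp, h⟩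
    · exact ⟨T4, by simp, h⟩
  · obtain ⟨u, w, huw⟩ := two_others c
    refine ⟨u, w, ?_⟩
    intro e he
    simp only [Finset.mem_insert, Finset.mem_singleton] at he
    rcases he with rfl|rfl|rfl|rfl
    · exact huw _ (fun h => h1 h.symm)
    · exact huw _ (fun h => h2 h.symm)
    · exact huw _ (fun h => h3 h.symm)
    · exact huw _ (fun h => h4 h.symm)


lemma third : ∀ c₁ c₂ : Fin 3, c₁ ≠ c₂ → ∃ c₃, c₃ ≠ c₁ ∧ c₃ ≠ c₂ := by decide

lemma forceLem : ∀ (x p q r c : Fin 3), (c = x ∨ c = p ∨ c = q ∨ c = r) →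
    c ≠ p → c ≠ q → c ≠ r → x = c := by decide

lemma dLem : ∀ (x y a b c : Fin 3), (c = x ∨ c = y ∨ c = a ∨ c = b) →
    c ≠ a → c ≠ b → (c = x ∨ c = y) := by decide

lemma yLem : ∀ (x y c₁ c₂ : Fin 3), c₁ ≠ c₂ → (c₁ = x ∨ c₁ = y) →
    (c₂ = x ∨ c₂ = y) → (y = c₁ ∨ y = c₂) := by decide

lemma eqLem : ∀ (x x' y c₁ c₂ : Fin 3), c₁ ≠ c₂ → (c₁ = x ∨ c₁ = y) →
    (c₂ = x ∨ c₂ = y) → (c₁ = x' ∨ c₁ = y) → (c₂ = x' ∨ c₂ = y) → x = x' := by decide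

lemma eqLem' : ∀ (x y y' c₁ c₂ : Fin 3), c₁ ≠ c₂ → (c₁ = x ∨ c₁ = y) →
    (c₂ = x ∨ c₂ = y) → (c₁ = x ∨ c₁ = y') → (c₂ = x ∨ c₂ = y') → y = y' := by decide

lemma l6Lem : ∀ (x x' a b c : Fin 3), x = x' → (c = x ∨ c = x' ∨ c = a ∨ c = b) →
    c ≠ a → c ≠ b → x = c := by decide

set_option maxRecDepth 8000 in
lemma aux1 (χ : Finset (Fin 12) → Fin 3) (hH : ¬ ∃ M, TwoColoredPerfectMatching χ M)
    (c₁ c₂ : Fin 3) (hc : c₁ ≠ c₂)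
    (hm1 : ∀ e ⊆ ({0,1,2,3,4,10} : Finset (Fin 12)), e.card = 3 → χ e = c₁)
    (hm2 : ∀ e ⊆ ({5,6,7,8,9,10} : Finset (Fin 12)), e.card = 3 → χ e = c₂) : False := by
  obtain ⟨c₃, h31, h32⟩ := third c₁ c₂ hc
  have k0 : χ ({0,1,2} : Finset (Fin 12)) = c₁ := hm1 _ (by decide) (by decide)
  have k1 : χ ({5,6,10} : Finset (Fin 12)) = c₂ := hm2 _ (by decide) (by decide)
  have k2 : χ ({7,8,9} : Finset (Fin 12)) = c₂ := hm2 _ (by decide) (by decide)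
  have k3 : χ ({0,3,4} : Finset (Fin 12)) = c₁ := hm1 _ (by decide) (by decide)
  have k4 : χ ({1,2,3} : Finset (Fin 12)) = c₁ := hm1 _ (by decide) (by decide)
  have k5 : χ ({1,2,4} : Finset (Fin 12)) = c₁ := hm1 _ (by decide) (by decide)
  have k6 : χ ({0,1,4} : Finset (Fin 12)) = c₁ := hm1 _ (by decide) (by decide)
  have k7 : χ ({6,7,8} : Finset (Fin 12)) = c₂ := hm2 _ (by decide) (by decide)
  have k8 : χ ({3,4,10} : Finset (Fin 12)) = c₁ := hm1 _ (by decide) (by decide)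
  have k9 : χ ({5,6,7} : Finset (Fin 12)) = c₂ := hm2 _ (by decide) (by decide)
  have k10 : χ ({6,7,9} : Finset (Fin 12)) = c₂ := hm2 _ (by decide) (by decide)
  have k11 : χ ({5,8,9} : Finset (Fin 12)) = c₂ := hm2 _ (by decide) (by decide)
  have k12 : χ ({5,7,8} : Finset (Fin 12)) = c₂ := hm2 _ (by decide) (by decide)
  have k13 : χ ({5,9,10} : Finset (Fin 12)) = c₂ := hm2 _ (by decide) (by decide)
  have k14 : χ ({8,9,10} : Finset (Fin 12)) = c₂ := hm2 _ (by decide) (by decide)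
  have k15 : χ ({1,2,10} : Finset (Fin 12)) = c₁ := hm1 _ (by decide) (by decide)
  have k16 : χ ({5,8,10} : Finset (Fin 12)) = c₂ := hm2 _ (by decide) (by decide)
  have k17 : χ ({0,4,10} : Finset (Fin 12)) = c₁ := hm1 _ (by decide) (by decide)
  have k18 : χ ({6,7,10} : Finset (Fin 12)) = c₂ := hm2 _ (by decide) (by decide)
  have k19 : χ ({0,3,10} : Finset (Fin 12)) = c₁ := hm1 _ (by decide) (by decide)
  have k20 : χ ({6,9,10} : Finset (Fin 12)) = c₂ := hm2 _ (by decide) (by decide)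
  have k21 : χ ({2,3,10} : Finset (Fin 12)) = c₁ := hm1 _ (by decide) (by decide)
  have k22 : χ ({0,2,3} : Finset (Fin 12)) = c₁ := hm1 _ (by decide) (by decide)
  have k23 : χ ({7,8,10} : Finset (Fin 12)) = c₂ := hm2 _ (by decide) (by decide)
  have k24 : χ ({7,9,10} : Finset (Fin 12)) = c₂ := hm2 _ (by decide) (by decide)
  have k25 : χ ({2,4,10} : Finset (Fin 12)) = c₁ := hm1 _ (by decide) (by decide)
  have cov0 := pm_cover χ hH ({3,4,11} : Finset (Fin 12)) ({0,1,2} : Finset (Fin 12)) ({5,6,10} : Finset (Fin 12)) ({7,8,9} : Finset (Fin 12)) ⟨by decide, by decide, by decide, by decide⟩ ⟨by decide, by decide, by decide, by decide, by decide, by decide⟩ (by decide)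
  have F0 : χ ({3,4,11} : Finset (Fin 12)) = c₃ := forceLem _ _ _ _ _ (cov0 c₃) (fun hh => h31 (hh.trans k0)) (fun hh => h32 (hh.trans k1)) (fun hh => h32 (hh.trans k2))
  have cov1 := pm_cover χ hH ({1,2,11} : Finset (Fin 12)) ({0,3,4} : Finset (Fin 12)) ({5,6,10} : Finset (Fin 12)) ({7,8,9} : Finset (Fin 12)) ⟨by decide, by decide, by decide, by decide⟩ ⟨by decide, by decide, by decide, by decide, by decide, by decide⟩ (by decide)
  have F1 : χ ({1,2,11} : Finset (Fin 12)) = c₃ := forceLem _ _ _ _ _ (cov1 c₃) (fun hh => h31 (hh.trans k3)) (fun hh => h32 (hh.trans k1)) (fun hh => h32 (hh.trans k2))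
  have cov2 := pm_cover χ hH ({0,4,11} : Finset (Fin 12)) ({1,2,3} : Finset (Fin 12)) ({5,6,10} : Finset (Fin 12)) ({7,8,9} : Finset (Fin 12)) ⟨by decide, by decide, by decide, by decide⟩ ⟨by decide, by decide, by decide, by decide, by decide, by decide⟩ (by decide)
  have F2 : χ ({0,4,11} : Finset (Fin 12)) = c₃ := forceLem _ _ _ _ _ (cov2 c₃) (fun hh => h31 (hh.trans k4)) (fun hh => h32 (hh.trans k1)) (fun hh => h32 (hh.trans k2))
  have cov3 := pm_cover χ hH ({0,3,11} : Finset (Fin 12)) ({1,2,4} : Finset (Fin 12)) ({5,6,10} : Finset (Fin 12)) ({7,8,9} : Finset (Fin 12)) ⟨by decide, by decide, by decide, by decide⟩ ⟨by decide, by decide, by decide, by decide, by decide, by decide⟩ (by decide)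
  have F3 : χ ({0,3,11} : Finset (Fin 12)) = c₃ := forceLem _ _ _ _ _ (cov3 c₃) (fun hh => h31 (hh.trans k5)) (fun hh => h32 (hh.trans k1)) (fun hh => h32 (hh.trans k2))
  have cov4 := pm_cover χ hH ({2,3,11} : Finset (Fin 12)) ({0,1,4} : Finset (Fin 12)) ({5,6,10} : Finset (Fin 12)) ({7,8,9} : Finset (Fin 12)) ⟨by decide, by decide, by decide, by decide⟩ ⟨by decide, by decide, by decide, by decide, by decide, by decide⟩ (by decide)
  have F4 : χ ({2,3,11} : Finset (Fin 12)) = c₃ := forceLem _ _ _ _ _ (cov4 c₃) (fun hh => h31 (hh.trans k6)) (fun hh => h32 (hh.trans k1)) (fun hh => h32 (hh.trans k2))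
  have cov5 := pm_cover χ hH ({5,9,11} : Finset (Fin 12)) ({6,7,8} : Finset (Fin 12)) ({0,1,2} : Finset (Fin 12)) ({3,4,10} : Finset (Fin 12)) ⟨by decide, by decide, by decide, by decide⟩ ⟨by decide, by decide, by decide, by decide, by decide, by decide⟩ (by decide)
  have F5 : χ ({5,9,11} : Finset (Fin 12)) = c₃ := forceLem _ _ _ _ _ (cov5 c₃) (fun hh => h32 (hh.trans k7)) (fun hh => h31 (hh.trans k0)) (fun hh => h31 (hh.trans k8))
  have cov6 := pm_cover χ hH ({8,9,11} : Finset (Fin 12)) ({5,6,7} : Finset (Fin 12)) ({0,1,2} : Finset (Fin 12)) ({3,4,10} : Finset (Fin 12)) ⟨by decide, by decide, by decide, by decide⟩ ⟨by decide, by decide, by decide, by decide, by decide, by decide⟩ (by decide)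
  have F6 : χ ({8,9,11} : Finset (Fin 12)) = c₃ := forceLem _ _ _ _ _ (cov6 c₃) (fun hh => h32 (hh.trans k9)) (fun hh => h31 (hh.trans k0)) (fun hh => h31 (hh.trans k8))
  have cov7 := pm_cover χ hH ({5,8,11} : Finset (Fin 12)) ({6,7,9} : Finset (Fin 12)) ({0,1,2} : Finset (Fin 12)) ({3,4,10} : Finset (Fin 12)) ⟨by decide, by decide, by decide, by decide⟩ ⟨by decide, by decide, by decide, by decide, by decide, by decide⟩ (by decide)
  have F7 : χ ({5,8,11} : Finset (Fin 12)) = c₃ := forceLem _ _ _ _ _ (cov7 c₃) (fun hh => h32 (hh.trans k10)) (fun hh => h31 (hh.trans k0)) (fun hh => h31 (hh.trans k8))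
  have cov8 := pm_cover χ hH ({6,7,11} : Finset (Fin 12)) ({5,8,9} : Finset (Fin 12)) ({0,1,2} : Finset (Fin 12)) ({3,4,10} : Finset (Fin 12)) ⟨by decide, by decide, by decide, by decide⟩ ⟨by decide, by decide, by decide, by decide, by decide, by decide⟩ (by decide)
  have F8 : χ ({6,7,11} : Finset (Fin 12)) = c₃ := forceLem _ _ _ _ _ (cov8 c₃) (fun hh => h32 (hh.trans k11)) (fun hh => h31 (hh.trans k0)) (fun hh => h31 (hh.trans k8))
  have cov9 := pm_cover χ hH ({5,6,11} : Finset (Fin 12)) ({7,8,9} : Finset (Fin 12)) ({0,1,2} : Finset (Fin 12)) ({3,4,10} : Finset (Fin 12)) ⟨by decide, by decide, by decide, by decide⟩ ⟨by decide, by decide, by decide, by decide, by decide, by decide⟩ (by decide)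
  have F9 : χ ({5,6,11} : Finset (Fin 12)) = c₃ := forceLem _ _ _ _ _ (cov9 c₃) (fun hh => h32 (hh.trans k2)) (fun hh => h31 (hh.trans k0)) (fun hh => h31 (hh.trans k8))
  have cov10 := pm_cover χ hH ({6,9,11} : Finset (Fin 12)) ({5,7,8} : Finset (Fin 12)) ({0,1,2} : Finset (Fin 12)) ({3,4,10} : Finset (Fin 12)) ⟨by decide, by decide, by decide, by decide⟩ ⟨by decide, by decide, by decide, by decide, by decide, by decide⟩ (by decide)
  have F10 : χ ({6,9,11} : Finset (Fin 12)) = c₃ := forceLem _ _ _ _ _ (cov10 c₃) (fun hh => h32 (hh.trans k12)) (fun hh => h31 (hh.trans k0)) (fun hh => h31 (hh.trans k8))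
  have cov11 := pm_cover χ hH ({1,2,8} : Finset (Fin 12)) ({0,6,7} : Finset (Fin 12)) ({3,4,11} : Finset (Fin 12)) ({5,9,10} : Finset (Fin 12)) ⟨by decide, by decide, by decide, by decide⟩ ⟨by decide, by decide, by decide, by decide, by decide, by decide⟩ (by decide)
  have cov12 := pm_cover χ hH ({1,2,8} : Finset (Fin 12)) ({0,6,7} : Finset (Fin 12)) ({5,9,11} : Finset (Fin 12)) ({3,4,10} : Finset (Fin 12)) ⟨by decide, by decide, by decide, by decide⟩ ⟨by decide, by decide, by decide, by decide, by decide, by decide⟩ (by decide)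
  have d0 : c₁ = χ ({1,2,8} : Finset (Fin 12)) ∨ c₁ = χ ({0,6,7} : Finset (Fin 12)) := dLem _ _ _ _ _ (cov11 c₁) (fun hh => h31 (hh.trans F0).symm) (fun hh => hc (hh.trans k13))
  have d1 : c₂ = χ ({1,2,8} : Finset (Fin 12)) ∨ c₂ = χ ({0,6,7} : Finset (Fin 12)) := dLem _ _ _ _ _ (cov12 c₂) (fun hh => h32 (hh.trans F5).symm) (fun hh => hc (hh.trans k8).symm)
  have cov13 := pm_cover χ hH ({3,4,5} : Finset (Fin 12)) ({0,6,7} : Finset (Fin 12)) ({1,2,11} : Finset (Fin 12)) ({8,9,10} : Finset (Fin 12)) ⟨by decide, by decide, by decide, by decide⟩ ⟨by decide, by decide, by decide, by decide, by decide, by decide⟩ (by decide)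
  have cov14 := pm_cover χ hH ({3,4,5} : Finset (Fin 12)) ({0,6,7} : Finset (Fin 12)) ({8,9,11} : Finset (Fin 12)) ({1,2,10} : Finset (Fin 12)) ⟨by decide, by decide, by decide, by decide⟩ ⟨by decide, by decide, by decide, by decide, by decide, by decide⟩ (by decide)
  have d2 : c₁ = χ ({3,4,5} : Finset (Fin 12)) ∨ c₁ = χ ({0,6,7} : Finset (Fin 12)) := dLem _ _ _ _ _ (cov13 c₁) (fun hh => h31 (hh.trans F1).symm) (fun hh => hc (hh.trans k14))
  have d3 : c₂ = χ ({3,4,5} : Finset (Fin 12)) ∨ c₂ = χ ({0,6,7} : Finset (Fin 12)) := dLem _ _ _ _ _ (cov14 c₂) (fun hh => h32 (hh.trans F6).symm) (fun hh => hc (hh.trans k15).symm)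
  have cov15 := pm_cover χ hH ({3,4,9} : Finset (Fin 12)) ({0,6,7} : Finset (Fin 12)) ({1,2,11} : Finset (Fin 12)) ({5,8,10} : Finset (Fin 12)) ⟨by decide, by decide, by decide, by decide⟩ ⟨by decide, by decide, by decide, by decide, by decide, by decide⟩ (by decide)
  have cov16 := pm_cover χ hH ({3,4,9} : Finset (Fin 12)) ({0,6,7} : Finset (Fin 12)) ({5,8,11} : Finset (Fin 12)) ({1,2,10} : Finset (Fin 12)) ⟨by decide, by decide, by decide, by decide⟩ ⟨by decide, by decide, by decide, by decide, by decide, by decide⟩ (by decide)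
  have d4 : c₁ = χ ({3,4,9} : Finset (Fin 12)) ∨ c₁ = χ ({0,6,7} : Finset (Fin 12)) := dLem _ _ _ _ _ (cov15 c₁) (fun hh => h31 (hh.trans F1).symm) (fun hh => hc (hh.trans k16))
  have d5 : c₂ = χ ({3,4,9} : Finset (Fin 12)) ∨ c₂ = χ ({0,6,7} : Finset (Fin 12)) := dLem _ _ _ _ _ (cov16 c₂) (fun hh => h32 (hh.trans F7).symm) (fun hh => hc (hh.trans k15).symm)
  have cov17 := pm_cover χ hH ({1,2,5} : Finset (Fin 12)) ({0,6,7} : Finset (Fin 12)) ({3,4,11} : Finset (Fin 12)) ({8,9,10} : Finset (Fin 12)) ⟨by decide, by decide, by decide, by decide⟩ ⟨by decide, by decide, by decide, by decide, by decide, by decide⟩ (by decide)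
  have cov18 := pm_cover χ hH ({1,2,5} : Finset (Fin 12)) ({0,6,7} : Finset (Fin 12)) ({8,9,11} : Finset (Fin 12)) ({3,4,10} : Finset (Fin 12)) ⟨by decide, by decide, by decide, by decide⟩ ⟨by decide, by decide, by decide, by decide, by decide, by decide⟩ (by decide)
  have d6 : c₁ = χ ({1,2,5} : Finset (Fin 12)) ∨ c₁ = χ ({0,6,7} : Finset (Fin 12)) := dLem _ _ _ _ _ (cov17 c₁) (fun hh => h31 (hh.trans F0).symm) (fun hh => hc (hh.trans k14))
  have d7 : c₂ = χ ({1,2,5} : Finset (Fin 12)) ∨ c₂ = χ ({0,6,7} : Finset (Fin 12)) := dLem _ _ _ _ _ (cov18 c₂) (fun hh => h32 (hh.trans F6).symm) (fun hh => hc (hh.trans k8).symm)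
  have cov19 := pm_cover χ hH ({1,2,9} : Finset (Fin 12)) ({3,6,7} : Finset (Fin 12)) ({0,4,11} : Finset (Fin 12)) ({5,8,10} : Finset (Fin 12)) ⟨by decide, by decide, by decide, by decide⟩ ⟨by decide, by decide, by decide, by decide, by decide, by decide⟩ (by decide)
  have cov20 := pm_cover χ hH ({1,2,9} : Finset (Fin 12)) ({3,6,7} : Finset (Fin 12)) ({5,8,11} : Finset (Fin 12)) ({0,4,10} : Finset (Fin 12)) ⟨by decide, by decide, by decide, by decide⟩ ⟨by decide, by decide, by decide, by decide, by decide, by decide⟩ (by decide)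
  have d8 : c₁ = χ ({1,2,9} : Finset (Fin 12)) ∨ c₁ = χ ({3,6,7} : Finset (Fin 12)) := dLem _ _ _ _ _ (cov19 c₁) (fun hh => h31 (hh.trans F2).symm) (fun hh => hc (hh.trans k16))
  have d9 : c₂ = χ ({1,2,9} : Finset (Fin 12)) ∨ c₂ = χ ({3,6,7} : Finset (Fin 12)) := dLem _ _ _ _ _ (cov20 c₂) (fun hh => h32 (hh.trans F7).symm) (fun hh => hc (hh.trans k17).symm)
  have cov21 := pm_cover χ hH ({1,2,9} : Finset (Fin 12)) ({0,5,8} : Finset (Fin 12)) ({3,4,11} : Finset (Fin 12)) ({6,7,10} : Finset (Fin 12)) ⟨by decide, by decide, by decide, by decide⟩ ⟨by decide, by decide, by decide, by decide, by decide, by decide⟩ (by decide)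
  have cov22 := pm_cover χ hH ({1,2,9} : Finset (Fin 12)) ({0,5,8} : Finset (Fin 12)) ({6,7,11} : Finset (Fin 12)) ({3,4,10} : Finset (Fin 12)) ⟨by decide, by decide, by decide, by decide⟩ ⟨by decide, by decide, by decide, by decide, by decide, by decide⟩ (by decide)
  have d10 : c₁ = χ ({1,2,9} : Finset (Fin 12)) ∨ c₁ = χ ({0,5,8} : Finset (Fin 12)) := dLem _ _ _ _ _ (cov21 c₁) (fun hh => h31 (hh.trans F0).symm) (fun hh => hc (hh.trans k18))
  have d11 : c₂ = χ ({1,2,9} : Finset (Fin 12)) ∨ c₂ = χ ({0,5,8} : Finset (Fin 12)) := dLem _ _ _ _ _ (cov22 c₂) (fun hh => h32 (hh.trans F8).symm) (fun hh => hc (hh.trans k8).symm)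
  have cov23 := pm_cover χ hH ({1,2,7} : Finset (Fin 12)) ({4,8,9} : Finset (Fin 12)) ({0,3,11} : Finset (Fin 12)) ({5,6,10} : Finset (Fin 12)) ⟨by decide, by decide, by decide, by decide⟩ ⟨by decide, by decide, by decide, by decide, by decide, by decide⟩ (by decide)
  have cov24 := pm_cover χ hH ({1,2,7} : Finset (Fin 12)) ({4,8,9} : Finset (Fin 12)) ({5,6,11} : Finset (Fin 12)) ({0,3,10} : Finset (Fin 12)) ⟨by decide, by decide, by decide, by decide⟩ ⟨by decide, by decide, by decide, by decide, by decide, by decide⟩ (by decide)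
  have d12 : c₁ = χ ({1,2,7} : Finset (Fin 12)) ∨ c₁ = χ ({4,8,9} : Finset (Fin 12)) := dLem _ _ _ _ _ (cov23 c₁) (fun hh => h31 (hh.trans F3).symm) (fun hh => hc (hh.trans k1))
  have d13 : c₂ = χ ({1,2,7} : Finset (Fin 12)) ∨ c₂ = χ ({4,8,9} : Finset (Fin 12)) := dLem _ _ _ _ _ (cov24 c₂) (fun hh => h32 (hh.trans F9).symm) (fun hh => hc (hh.trans k19).symm)
  have cov25 := pm_cover χ hH ({1,2,7} : Finset (Fin 12)) ({0,5,6} : Finset (Fin 12)) ({3,4,11} : Finset (Fin 12)) ({8,9,10} : Finset (Fin 12)) ⟨by decide, by decide, by decide, by decide⟩ ⟨by decide, by decide, by decide, by decide, by decide, by decide⟩ (by decide)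
  have cov26 := pm_cover χ hH ({1,2,7} : Finset (Fin 12)) ({0,5,6} : Finset (Fin 12)) ({8,9,11} : Finset (Fin 12)) ({3,4,10} : Finset (Fin 12)) ⟨by decide, by decide, by decide, by decide⟩ ⟨by decide, by decide, by decide, by decide, by decide, by decide⟩ (by decide)
  have d14 : c₁ = χ ({1,2,7} : Finset (Fin 12)) ∨ c₁ = χ ({0,5,6} : Finset (Fin 12)) := dLem _ _ _ _ _ (cov25 c₁) (fun hh => h31 (hh.trans F0).symm) (fun hh => hc (hh.trans k14))
  have d15 : c₂ = χ ({1,2,7} : Finset (Fin 12)) ∨ c₂ = χ ({0,5,6} : Finset (Fin 12)) := dLem _ _ _ _ _ (cov26 c₂) (fun hh => h32 (hh.trans F6).symm) (fun hh => hc (hh.trans k8).symm)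
  have cov27 := pm_cover χ hH ({0,1,5} : Finset (Fin 12)) ({4,7,8} : Finset (Fin 12)) ({2,3,11} : Finset (Fin 12)) ({6,9,10} : Finset (Fin 12)) ⟨by decide, by decide, by decide, by decide⟩ ⟨by decide, by decide, by decide, by decide, by decide, by decide⟩ (by decide)
  have cov28 := pm_cover χ hH ({0,1,5} : Finset (Fin 12)) ({4,7,8} : Finset (Fin 12)) ({6,9,11} : Finset (Fin 12)) ({2,3,10} : Finset (Fin 12)) ⟨by decide, by decide, by decide, by decide⟩ ⟨by decide, by decide, by decide, by decide, by decide, by decide⟩ (by decide)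
  have d16 : c₁ = χ ({0,1,5} : Finset (Fin 12)) ∨ c₁ = χ ({4,7,8} : Finset (Fin 12)) := dLem _ _ _ _ _ (cov27 c₁) (fun hh => h31 (hh.trans F4).symm) (fun hh => hc (hh.trans k20))
  have d17 : c₂ = χ ({0,1,5} : Finset (Fin 12)) ∨ c₂ = χ ({4,7,8} : Finset (Fin 12)) := dLem _ _ _ _ _ (cov28 c₂) (fun hh => h32 (hh.trans F10).symm) (fun hh => hc (hh.trans k21).symm)
  have cov29 := pm_cover χ hH ({0,1,7} : Finset (Fin 12)) ({4,5,6} : Finset (Fin 12)) ({2,3,11} : Finset (Fin 12)) ({8,9,10} : Finset (Fin 12)) ⟨by decide, by decide, by decide, by decide⟩ ⟨by decide, by decide, by decide, by decide, by decide, by decide⟩ (by decide)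
  have cov30 := pm_cover χ hH ({0,1,7} : Finset (Fin 12)) ({4,5,6} : Finset (Fin 12)) ({8,9,11} : Finset (Fin 12)) ({2,3,10} : Finset (Fin 12)) ⟨by decide, by decide, by decide, by decide⟩ ⟨by decide, by decide, by decide, by decide, by decide, by decide⟩ (by decide)
  have d18 : c₁ = χ ({0,1,7} : Finset (Fin 12)) ∨ c₁ = χ ({4,5,6} : Finset (Fin 12)) := dLem _ _ _ _ _ (cov29 c₁) (fun hh => h31 (hh.trans F4).symm) (fun hh => hc (hh.trans k14))
  have d19 : c₂ = χ ({0,1,7} : Finset (Fin 12)) ∨ c₂ = χ ({4,5,6} : Finset (Fin 12)) := dLem _ _ _ _ _ (cov30 c₂) (fun hh => h32 (hh.trans F6).symm) (fun hh => hc (hh.trans k21).symm)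
  have hy0 : χ ({4,7,8} : Finset (Fin 12)) = c₁ ∨ χ ({4,7,8} : Finset (Fin 12)) = c₂ := yLem _ _ _ _ hc d16 d17
  have hy1 : χ ({4,5,6} : Finset (Fin 12)) = c₁ ∨ χ ({4,5,6} : Finset (Fin 12)) = c₂ := yLem _ _ _ _ hc d18 d19
  have cov31 := pm_cover χ hH ({0,6,11} : Finset (Fin 12)) ({1,2,3} : Finset (Fin 12)) ({4,7,8} : Finset (Fin 12)) ({5,9,10} : Finset (Fin 12)) ⟨by decide, by decide, by decide, by decide⟩ ⟨by decide, by decide, by decide, by decide, by decide, by decide⟩ (by decide)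
  have F11 : χ ({0,6,11} : Finset (Fin 12)) = c₃ := forceLem _ _ _ _ _ (cov31 c₃) (fun hh => h31 (hh.trans k4)) (fun hh => (hy0).elim (fun hq => h31 (hh.trans hq)) (fun hq => h32 (hh.trans hq))) (fun hh => h32 (hh.trans k13))
  have cov32 := pm_cover χ hH ({1,9,11} : Finset (Fin 12)) ({0,2,3} : Finset (Fin 12)) ({4,5,6} : Finset (Fin 12)) ({7,8,10} : Finset (Fin 12)) ⟨by decide, by decide, by decide, by decide⟩ ⟨by decide, by decide, by decide, by decide, by decide, by decide⟩ (by decide)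
  have F12 : χ ({1,9,11} : Finset (Fin 12)) = c₃ := forceLem _ _ _ _ _ (cov32 c₃) (fun hh => h31 (hh.trans k22)) (fun hh => (hy1).elim (fun hq => h31 (hh.trans hq)) (fun hq => h32 (hh.trans hq))) (fun hh => h32 (hh.trans k23))
  have cov33 := pm_cover χ hH ({1,7,11} : Finset (Fin 12)) ({0,2,3} : Finset (Fin 12)) ({4,5,6} : Finset (Fin 12)) ({8,9,10} : Finset (Fin 12)) ⟨by decide, by decide, by decide, by decide⟩ ⟨by decide, by decide, by decide, by decide, by decide, by decide⟩ (by decide)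
  have F13 : χ ({1,7,11} : Finset (Fin 12)) = c₃ := forceLem _ _ _ _ _ (cov33 c₃) (fun hh => h31 (hh.trans k22)) (fun hh => (hy1).elim (fun hq => h31 (hh.trans hq)) (fun hq => h32 (hh.trans hq))) (fun hh => h32 (hh.trans k14))
  have E0 : χ ({1,2,8} : Finset (Fin 12)) = χ ({3,4,5} : Finset (Fin 12)) := eqLem _ _ _ _ _ hc d0 d1 d2 d3
  have E1 : χ ({3,4,9} : Finset (Fin 12)) = χ ({1,2,5} : Finset (Fin 12)) := eqLem _ _ _ _ _ hc d4 d5 d6 d7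
  have E2 : χ ({3,6,7} : Finset (Fin 12)) = χ ({0,5,8} : Finset (Fin 12)) := eqLem' _ _ _ _ _ hc d8 d9 d10 d11
  have E3 : χ ({4,8,9} : Finset (Fin 12)) = χ ({0,5,6} : Finset (Fin 12)) := eqLem' _ _ _ _ _ hc d12 d13 d14 d15
  have cov34 := pm_cover χ hH ({1,2,8} : Finset (Fin 12)) ({3,4,5} : Finset (Fin 12)) ({0,6,11} : Finset (Fin 12)) ({7,9,10} : Finset (Fin 12)) ⟨by decide, by decide, by decide, by decide⟩ ⟨by decide, by decide, by decide, by decide, by decide, by decide⟩ (by decide)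
  have G0 : χ ({1,2,8} : Finset (Fin 12)) = c₁ := l6Lem _ _ _ _ _ E0 (cov34 c₁) (fun hh => h31 (hh.trans F11).symm) (fun hh => hc (hh.trans k24))
  have cov35 := pm_cover χ hH ({3,4,9} : Finset (Fin 12)) ({1,2,5} : Finset (Fin 12)) ({0,6,11} : Finset (Fin 12)) ({7,8,10} : Finset (Fin 12)) ⟨by decide, by decide, by decide, by decide⟩ ⟨by decide, by decide, by decide, by decide, by decide, by decide⟩ (by decide)
  have G1 : χ ({3,4,9} : Finset (Fin 12)) = c₁ := l6Lem _ _ _ _ _ E1 (cov35 c₁) (fun hh => h31 (hh.trans F11).symm) (fun hh => hc (hh.trans k23))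
  have cov36 := pm_cover χ hH ({3,6,7} : Finset (Fin 12)) ({0,5,8} : Finset (Fin 12)) ({1,9,11} : Finset (Fin 12)) ({2,4,10} : Finset (Fin 12)) ⟨by decide, by decide, by decide, by decide⟩ ⟨by decide, by decide, by decide, by decide, by decide, by decide⟩ (by decide)
  have G2 : χ ({3,6,7} : Finset (Fin 12)) = c₂ := l6Lem _ _ _ _ _ E2 (cov36 c₂) (fun hh => h32 (hh.trans F12).symm) (fun hh => hc (hh.trans k25).symm)
  have cov37 := pm_cover χ hH ({4,8,9} : Finset (Fin 12)) ({0,5,6} : Finset (Fin 12)) ({1,7,11} : Finset (Fin 12)) ({2,3,10} : Finset (Fin 12)) ⟨by decide, by decide, by decide, by decide⟩ ⟨by decide, by decide, by decide, by decide, by decide, by decide⟩ (by decide)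
  have G3 : χ ({4,8,9} : Finset (Fin 12)) = c₂ := l6Lem _ _ _ _ _ E3 (cov37 c₂) (fun hh => h32 (hh.trans F13).symm) (fun hh => hc (hh.trans k21).symm)
  have cov38 := pm_cover χ hH ({0,5,10} : Finset (Fin 12)) ({6,7,11} : Finset (Fin 12)) ({1,2,8} : Finset (Fin 12)) ({3,4,9} : Finset (Fin 12)) ⟨by decide, by decide, by decide, by decide⟩ ⟨by decide, by decide, by decide, by decide, by decide, by decide⟩ (by decide)
  have tA : χ ({0,5,10} : Finset (Fin 12)) = c₂ := forceLem _ _ _ _ _ (cov38 c₂) (fun hh => h32 (hh.trans F8).symm) (fun hh => hc (hh.trans G0).symm) (fun hh => hc (hh.trans G1).symm)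
  have cov39 := pm_cover χ hH ({0,5,10} : Finset (Fin 12)) ({1,2,11} : Finset (Fin 12)) ({3,6,7} : Finset (Fin 12)) ({4,8,9} : Finset (Fin 12)) ⟨by decide, by decide, by decide, by decide⟩ ⟨by decide, by decide, by decide, by decide, by decide, by decide⟩ (by decide)
  have tB : χ ({0,5,10} : Finset (Fin 12)) = c₁ := forceLem _ _ _ _ _ (cov39 c₁) (fun hh => h31 (hh.trans F1).symm) (fun hh => hc (hh.trans G2)) (fun hh => hc (hh.trans G3))
  exact hc (tB.symm.trans tA)

lemma no2cover : ∀ c₁ c₂ : Fin 3, (∀ c : Fin 3, c = c₁ ∨ c = c₁ ∨ c = c₂ ∨ c = c₂) → False := by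
  decide

set_option maxRecDepth 8000 in
lemma aux0 (χ : Finset (Fin 12) → Fin 3) (hH : ¬ ∃ M, TwoColoredPerfectMatching χ M)
    (c₁ c₂ : Fin 3)
    (hm1 : ∀ e ⊆ ({0,1,2,3,4,5} : Finset (Fin 12)), e.card = 3 → χ e = c₁)
    (hm2 : ∀ e ⊆ ({6,7,8,9,10,11} : Finset (Fin 12)), e.card = 3 → χ e = c₂) : False := by
  have cov := pm_cover χ hH {0,1,2} {3,4,5} {6,7,8} {9,10,11}
    ⟨by decide, by decide, by decide, by decide⟩
    ⟨by decide, by decide, by decide, by decide, by decide, by decide⟩ (by decide)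
  have e1 : χ ({0,1,2} : Finset (Fin 12)) = c₁ := hm1 _ (by decide) (by decide)
  have e2 : χ ({3,4,5} : Finset (Fin 12)) = c₁ := hm1 _ (by decide) (by decide)
  have e3 : χ ({6,7,8} : Finset (Fin 12)) = c₂ := hm2 _ (by decide) (by decide)
  have e4 : χ ({9,10,11} : Finset (Fin 12)) = c₂ := hm2 _ (by decide) (by decide)
  refine no2cover c₁ c₂ (fun c => ?_)
  have h := cov c
  rw [e1, e2, e3, e4] at h
  exact h

lemma transfer (χ : Finset (Fin 12) → Fin 3) (hH : ¬ ∃ M, TwoColoredPerfectMatching χ M)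
    (f : Fin 12 → Fin 12) (hf : Function.Bijective f) :
    ¬ ∃ M, TwoColoredPerfectMatching (fun e => χ (e.image f)) M := by
  rintro ⟨M, hcard, h3, hdisj, hcov, cA, cB, hcol⟩
  apply hH
  refine ⟨M.image (Finset.image f), ?_, ?_, ?_, ?_, cA, cB, ?_⟩
  · rw [Finset.card_image_of_injective _ (Finset.image_injective hf.injective)]; exact hcard
  · intro e he
    obtain ⟨e', he', rfl⟩ := Finset.mem_image.mp he
    rw [Finset.card_image_of_injective _ hf.injective]
    exact h3 e' he'
  · intro e he g hg hne
    obtain ⟨e', he', rfl⟩ := Finset.mem_image.mp he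
    obtain ⟨g', hg', rfl⟩ := Finset.mem_image.mp hg
    rw [Finset.disjoint_image hf.injective]
    exact hdisj e' he' g' hg' (fun h => hne (by rw [h]))
  · intro u
    obtain ⟨x, rfl⟩ := hf.surjective u
    obtain ⟨e, he, hx⟩ := hcov x
    exact ⟨e.image f, Finset.mem_image_of_mem _ he, Finset.mem_image_of_mem f hx⟩
  · intro e he
    obtain ⟨e', he', rfl⟩ := Finset.mem_image.mp he
    exact hcol e' he'

theorem mono_K6_different_colors_intersect_in_two (χ : Finset (Fin 12) → Fin 3)
    (hH : ¬ ∃ M, TwoColoredPerfectMatching χ M)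
    (X₁ X₂ : Finset (Fin 12)) (c₁ c₂ : Fin 3)
    (hX₁ : X₁.card = 6) (hX₂ : X₂.card = 6)
    (hmono₁ : ∀ e ⊆ X₁, e.card = 3 → χ e = c₁)
    (hmono₂ : ∀ e ⊆ X₂, e.card = 3 → χ e = c₂)
    (hc : c₁ ≠ c₂) :
    (X₁ ∩ X₂).card = 2 := by
  have hle : (X₁ ∩ X₂).card ≤ 2 := by
    by_contra h
    push_neg at h
    obtain ⟨e, he, hecard⟩ := Finset.exists_subset_card_eq (show 3 ≤ (X₁ ∩ X₂).card from h)
    exact hc ((hmono₁ e (he.trans Finset.inter_subset_left) hecard).symm.trans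
      (hmono₂ e (he.trans Finset.inter_subset_right) hecard))
  have hge : 2 ≤ (X₁ ∩ X₂).card := by
    by_contra hlt
    push_neg at hlt
    interval_cases h : (X₁ ∩ X₂).card
    · -- card = 0 : X₁, X₂ disjoint
      have hdisj : Disjoint X₁ X₂ := Finset.disjoint_iff_inter_eq_empty.mpr
        (Finset.card_eq_zero.mp h)
      set lA := X₁.sort (·≤·) with hlA
      set lB := X₂.sort (·≤·) with hlB
      have hlenA : lA.length = 6 := by rw [hlA, Finset.length_sort, hX₁]
      have hlenB : lB.length = 6 := by rw [hlB, Finset.length_sort, hX₂]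
      set l : List (Fin 12) := lA ++ lB with hl
      have hlen : l.length = 12 := by simp [hl, hlenA, hlenB]
      have hmemA : ∀ x ∈ lA, x ∈ X₁ := fun x hx => (Finset.mem_sort _).mp hx
      have hmemB : ∀ x ∈ lB, x ∈ X₂ := fun x hx => (Finset.mem_sort _).mp hx
      have hnd : l.Nodup := by
        rw [hl, List.nodup_append]
        refine ⟨Finset.sort_nodup _ _, Finset.sort_nodup _ _, ?_⟩
        intro x hx y hx' hxy; subst hxy
        exact (Finset.disjoint_left.mp hdisj (hmemA x hx)) (hmemB x hx')
      set F : Fin 12 → Fin 12 := fun i => l.get (Fin.cast hlen.symm i) with hF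
      have hinj : Function.Injective F := by
        intro i j hij
        have h2 := (List.Nodup.get_inj_iff hnd).mp hij
        exact Fin.ext (by simpa using congrArg Fin.val h2)
      have hbij : Function.Bijective F := Finite.injective_iff_bijective.mp hinj
      have hFA : ∀ i : Fin 12, i.1 < 6 → F i ∈ X₁ := by
        intro i hi
        have hi' : i.1 < lA.length := by omega
        have : F i = lA.get ⟨i.1, hi'⟩ := by
          simp only [hF, hl, List.get_eq_getElem, Fin.coe_cast]
          exact List.getElem_append_left hi'
        rw [this]
        exact hmemA _ (List.get_mem _ _)
      have hFB : ∀ i : Fin 12, 6 ≤ i.1 → F i ∈ X₂ := by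
        intro i hi
        have hi' : i.1 - lA.length < lB.length := by omega
        have hge' : lA.length ≤ i.1 := by omega
        have : F i = lB.get ⟨i.1 - lA.length, hi'⟩ := by
          simp only [hF, hl, List.get_eq_getElem, Fin.coe_cast]
          rw [List.getElem_append_right hge']
        rw [this]
        exact hmemB _ (List.get_mem _ _)
      have eq1 : Finset.image F {0,1,2,3,4,5} = X₁ := by
        apply Finset.eq_of_subset_of_card_le
        · intro x hx
          obtain ⟨i, hi, rfl⟩ := Finset.mem_image.mp hx
          fin_cases hi <;> exact hFA _ (by decide)
        · rw [Finset.card_image_of_injective _ hinj, hX₁]; decide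
      have eq2 : Finset.image F {6,7,8,9,10,11} = X₂ := by
        apply Finset.eq_of_subset_of_card_le
        · intro x hx
          obtain ⟨i, hi, rfl⟩ := Finset.mem_image.mp hx
          fin_cases hi <;> exact hFB _ (by decide)
        · rw [Finset.card_image_of_injective _ hinj, hX₂]; decide
      refine aux0 (fun e => χ (e.image F)) (transfer χ hH F hbij) c₁ c₂ ?_ ?_
      · intro e he hcard
        exact hmono₁ _ (by rw [← eq1]; exact Finset.image_subset_image he)
          (by rw [Finset.card_image_of_injective _ hinj]; exact hcard)
      · intro e he hcard
        exact hmono₂ _ (by rw [← eq2]; exact Finset.image_subset_image he)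
          (by rw [Finset.card_image_of_injective _ hinj]; exact hcard)
    · -- card = 1
      obtain ⟨w, hw⟩ := Finset.card_eq_one.mp h
      have hwX₁ : w ∈ X₁ := Finset.mem_of_mem_inter_left (hw ▸ Finset.mem_singleton_self w)
      have hwX₂ : w ∈ X₂ := Finset.mem_of_mem_inter_right (hw ▸ Finset.mem_singleton_self w)
      have hcardA : (X₁ \ X₂).card = 5 := by
        have := Finset.card_inter_add_card_sdiff X₁ X₂
        omega
      have hcardB : (X₂ \ X₁).card = 5 := by
        have := Finset.card_inter_add_card_sdiff X₂ X₁
        rw [Finset.inter_comm] at this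
        omega
      have hcardU : (X₁ ∪ X₂).card = 11 := by
        have := Finset.card_union_add_card_inter X₁ X₂
        omega
      have hcardUc : (X₁ ∪ X₂)ᶜ.card = 1 := by
        rw [Finset.card_compl, hcardU]; rfl
      obtain ⟨v, hv⟩ := Finset.card_eq_one.mp hcardUc
      have hvU : v ∉ X₁ ∪ X₂ := by
        have : v ∈ (X₁ ∪ X₂)ᶜ := hv ▸ Finset.mem_singleton_self v
        exact Finset.mem_compl.mp this
      have hvX₁ : v ∉ X₁ := fun hx => hvU (Finset.mem_union_left _ hx)
      have hvX₂ : v ∉ X₂ := fun hx => hvU (Finset.mem_union_right _ hx)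
      set lA := (X₁ \ X₂).sort (·≤·) with hlA
      set lB := (X₂ \ X₁).sort (·≤·) with hlB
      have hlenA : lA.length = 5 := by rw [hlA, Finset.length_sort, hcardA]
      have hlenB : lB.length = 5 := by rw [hlB, Finset.length_sort, hcardB]
      have hmemA : ∀ x ∈ lA, x ∈ X₁ \ X₂ := fun x hx => (Finset.mem_sort _).mp hx
      have hmemB : ∀ x ∈ lB, x ∈ X₂ \ X₁ := fun x hx => (Finset.mem_sort _).mp hx
      set l : List (Fin 12) := lA ++ (lB ++ [w, v]) with hl
      have hlen : l.length = 12 := by simp [hl, hlenA, hlenB]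
      have hwv : w ≠ v := fun hh => hvX₁ (hh ▸ hwX₁)
      have hnd : l.Nodup := by
        rw [hl, List.nodup_append]
        refine ⟨Finset.sort_nodup _ _, ?_, ?_⟩
        · rw [List.nodup_append]
          refine ⟨Finset.sort_nodup _ _, by simp [hwv], ?_⟩
          intro x hx y hx' hxy; subst hxy
          have hxB := hmemB x hx
          simp only [List.mem_cons, List.mem_singleton, List.not_mem_nil, or_false] at hx'
          rcases hx' with rfl | rfl
          · exact (Finset.mem_sdiff.mp hxB).2 hwX₁
          · exact hvX₂ (Finset.mem_sdiff.mp hxB).1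
        · intro x hx y hx' hxy; subst hxy
          have hxA := hmemA x hx
          rw [List.mem_append] at hx'
          rcases hx' with hx' | hx'
          · exact (Finset.mem_sdiff.mp (hmemB x hx')).2 (Finset.mem_sdiff.mp hxA).1
          · simp only [List.mem_cons, List.mem_singleton, List.not_mem_nil, or_false] at hx'
            rcases hx' with rfl | rfl
            · exact (Finset.mem_sdiff.mp hxA).2 hwX₂
            · exact hvX₁ (Finset.mem_sdiff.mp hxA).1
      set F : Fin 12 → Fin 12 := fun i => l.get (Fin.cast hlen.symm i) with hF
      have hinj : Function.Injective F := by
        intro i j hij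
        have h2 := (List.Nodup.get_inj_iff hnd).mp hij
        exact Fin.ext (by simpa using congrArg Fin.val h2)
      have hbij : Function.Bijective F := Finite.injective_iff_bijective.mp hinj
      have hFA : ∀ i : Fin 12, i.1 < 5 → F i ∈ X₁ \ X₂ := by
        intro i hi
        have hi' : i.1 < lA.length := by omega
        have : F i = lA.get ⟨i.1, hi'⟩ := by
          simp only [hF, hl, List.get_eq_getElem, Fin.coe_cast]
          exact List.getElem_append_left hi'
        rw [this]
        exact hmemA _ (List.get_mem _ _)
      have hFB : ∀ i : Fin 12, 5 ≤ i.1 → i.1 < 10 → F i ∈ X₂ \ X₁ := by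
        intro i hi hi2
        have hge' : lA.length ≤ i.1 := by omega
        have hi' : i.1 - lA.length < lB.length := by omega
        have : F i = lB.get ⟨i.1 - lA.length, hi'⟩ := by
          simp only [hF, hl, List.get_eq_getElem, Fin.coe_cast]
          rw [List.getElem_append_right hge']
          exact List.getElem_append_left hi'
        rw [this]
        exact hmemB _ (List.get_mem _ _)
      have hFw : F 10 = w := by
        simp only [hF, hl, List.get_eq_getElem, Fin.coe_cast]
        rw [List.getElem_append_right (by rw [hlenA]; decide),
          List.getElem_append_right (by rw [hlenA, hlenB]; decide)]
        simp only [hlenA, hlenB]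
        rfl
      have hFv : F 11 = v := by
        simp only [hF, hl, List.get_eq_getElem, Fin.coe_cast]
        rw [List.getElem_append_right (by rw [hlenA]; decide),
          List.getElem_append_right (by rw [hlenA, hlenB]; decide)]
        simp only [hlenA, hlenB]
        rfl
      have eq1 : Finset.image F {0,1,2,3,4,10} = X₁ := by
        apply Finset.eq_of_subset_of_card_le
        · intro x hx
          obtain ⟨i, hi, rfl⟩ := Finset.mem_image.mp hx
          fin_cases hi
          · exact (Finset.mem_sdiff.mp (hFA _ (by decide))).1
          · exact (Finset.mem_sdiff.mp (hFA _ (by decide))).1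
          · exact (Finset.mem_sdiff.mp (hFA _ (by decide))).1
          · exact (Finset.mem_sdiff.mp (hFA _ (by decide))).1
          · exact (Finset.mem_sdiff.mp (hFA _ (by decide))).1
          · rw [hFw]; exact hwX₁
        · rw [Finset.card_image_of_injective _ hinj, hX₁]; decide
      have eq2 : Finset.image F {5,6,7,8,9,10} = X₂ := by
        apply Finset.eq_of_subset_of_card_le
        · intro x hx
          obtain ⟨i, hi, rfl⟩ := Finset.mem_image.mp hx
          fin_cases hi
          · exact (Finset.mem_sdiff.mp (hFB _ (by decide) (by decide))).1
          · exact (Finset.mem_sdiff.mp (hFB _ (by decide) (by decide))).1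
          · exact (Finset.mem_sdiff.mp (hFB _ (by decide) (by decide))).1
          · exact (Finset.mem_sdiff.mp (hFB _ (by decide) (by decide))).1
          · exact (Finset.mem_sdiff.mp (hFB _ (by decide) (by decide))).1
          · rw [hFw]; exact hwX₂
        · rw [Finset.card_image_of_injective _ hinj, hX₂]; decide
      refine aux1 (fun e => χ (e.image F)) (transfer χ hH F hbij) c₁ c₂ hc ?_ ?_
      · intro e he hcard
        exact hmono₁ _ (by rw [← eq1]; exact Finset.image_subset_image he)
          (by rw [Finset.card_image_of_injective _ hinj]; exact hcard)
      · intro e he hcard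
        exact hmono₂ _ (by rw [← eq2]; exact Finset.image_subset_image he)
          (by rw [Finset.card_image_of_injective _ hinj]; exact hcard)
  omega
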